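/- arXiv:1710.04566 — 2 statements merged into one kernel-verified Lean document; each statement's English description precedes it below -/
import Mathlib

section
/- Let x ≤ y in E_J and let φ : x = x₀ ≤ x₁ ≤ ⋯ ≤ x_{r+1} = y be an E_J-multichain with 𝓡_φ ≠ 0. Then x_{i−1} < x_i for all i ∈ {2, 3, …, r+1}; that is, all steps of φ after the first are strict. -/
set_option linter.unusedVariables false

open scoped Classical
noncomputable section
namespace WGI

variable (Γ : Type) [AddCommGroup Γ] [LinearOrder Γ] [IsOrderedAddMonoid Γ]

/-- The group ring `ℤ[Γ]`, with basis `{q^γ : γ ∈ Γ}`. -/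
abbrev LZ := AddMonoidAlgebra ℤ Γ

/-- The basis element `q^γ` of `ℤ[Γ]`. -/
def qp (γ : Γ) : LZ Γ := AddMonoidAlgebra.single γ 1

/-- The bar involution of `ℤ[Γ]`, sending `q^γ` to `q^{-γ}`. -/
def barZ : LZ Γ ≃+* LZ Γ :=
  (AddMonoidAlgebra.domCongr ℤ ℤ (AddEquiv.neg Γ)).toRingEquiv

/-- The coefficient `[q^γ] f`. -/
def coeffq (f : LZ Γ) (γ : Γ) : ℤ := f.coeff γ

/-- The degree of `f ∈ ℤ[Γ]`: the maximum `γ` with `[q^γ] f ≠ 0` (`⊥` for `f = 0`). -/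
def degq (f : LZ Γ) : WithBot Γ := f.coeff.support.max

/-- The truncation `U_{α/2}(f) = Σ_{2γ > α} [q^γ]f · q^γ`. -/
def Uhalf (α : Γ) (f : LZ Γ) : LZ Γ := AddMonoidAlgebra.ofCoeff (Finsupp.filter (fun γ => α < γ + γ) f.coeff)

/-- The truncation `L_{α/2}(f) = Σ_{2γ < α} [q^γ]f · q^γ`. -/
def Lhalf (α : Γ) (f : LZ Γ) : LZ Γ := AddMonoidAlgebra.ofCoeff (Finsupp.filter (fun γ => γ + γ < α) f.coeff)

variable {B W : Type} [Group W] {M : CoxeterMatrix B} (cs : CoxeterSystem M W)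

/-- The sign `ε_w = (-1)^{ℓ(w)}`. -/
def eps (w : W) : ℤ := (-1) ^ (cs.length w)

/-- The Bruhat order on `W`: generated by `u < tu` for reflections `t` with `ℓ(u) < ℓ(tu)`. -/
def BruhatLE : W → W → Prop :=
  Relation.ReflTransGen (fun u v => cs.length u < cs.length v ∧ ∃ t, cs.IsReflection t ∧ v = t * u)

/-- The strict Bruhat order. -/
def BruhatLT (u v : W) : Prop := BruhatLE cs u v ∧ u ≠ v

/-- `x` is a suffix of `y` iff `y = z * x` with `ℓ(y) = ℓ(z) + ℓ(x)`; this is the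
left weak Bruhat order `x ≤_L y`. -/
def IsSuffix (x y : W) : Prop := ∃ z, y = z * x ∧ cs.length y = cs.length z + cs.length x

/-- The set `D_J` of minimum coset representatives. -/
def DJ (J : Set B) : Set W := {w | ∀ j ∈ J, cs.length w < cs.length (w * cs.simple j)}

/-- The subgroup `Γ″` of `Γ` generated by the values `L(s)`, `s ∈ S`. -/
def GammaPP (L : W → Γ) : AddSubgroup Γ :=
  AddSubgroup.closure (Set.range fun i : B => L (cs.simple i))

/-- `f` lies in the subring `ℤ[Γ′]` of `ℤ`-linear combinations of products `∏ q_{s_i}^{n_i}`,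
equivalently the support of `f` is contained in `Γ″`. -/
def InZGammaPrime (L : W → Γ) (f : LZ Γ) : Prop :=
  ∀ γ ∈ f.coeff.support, γ ∈ GammaPP Γ cs L

/-- The `𝓡`-polynomial of a length-one multichain:
`𝓡_{x,y} = q_x^{-1} q_y · bar(R_{x,y})`. -/
def Rsingle (L : W → Γ) (Rp : W → W → LZ Γ) (x y : W) : LZ Γ :=
  qp Γ (L y - L x) * barZ Γ (Rp x y)

/-- The `𝓡`-polynomial `𝓡_φ` of a multichain `φ : x = c 0 ≤ c 1 ≤ ⋯ ≤ c (r+1) = y`,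
defined recursively by `𝓡_φ = 𝓡_{x,x₁} · U_{(L(y)-L(x₁))/2}(q_{x₁}^{-1} q_y bar(𝓡_{φ'}))`
where `φ'` is the tail of `φ`. -/
def RchainAux (L : W → Γ) (Rp : W → W → LZ Γ) : (r : ℕ) → (Fin (r + 2) → W) → LZ Γ
  | 0, c => Rsingle Γ L Rp (c 0) (c 1)
  | r + 1, c =>
      Rsingle Γ L Rp (c 0) (c 1) *
        Uhalf Γ (L (c (Fin.last (r + 2))) - L (c 1))
          (qp Γ (L (c (Fin.last (r + 2))) - L (c 1)) *
            barZ Γ (RchainAux L Rp r (fun i => c i.succ)))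

/-- The `𝓡*`-polynomial `𝓡*_φ` of a multichain `φ : x = c 0 ≤ ⋯ ≤ c (r+1) = y`,
defined recursively by `𝓡*_φ = U_{(L(x_r)-L(x))/2}(q_x^{-1} q_{x_r} bar(𝓡*_{φ'})) · 𝓡*_{x_r,y}`
where `φ'` is the initial segment of `φ`. -/
def RstarAux (L : W → Γ) (Rt : W → W → LZ Γ) : (r : ℕ) → (Fin (r + 2) → W) → LZ Γ
  | 0, c => Rsingle Γ L Rt (c 0) (c 1)
  | r + 1, c =>
      Uhalf Γ (L (c ⟨r + 1, by omega⟩) - L (c 0))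
          (qp Γ (L (c ⟨r + 1, by omega⟩) - L (c 0)) *
            barZ Γ (RstarAux L Rt r (fun i => c i.castSucc))) *
        Rsingle Γ L Rt (c ⟨r + 1, by omega⟩) (c (Fin.last (r + 2)))

/-- An `E_J`-multichain `x = x₀ ≤ x₁ ≤ ⋯ ≤ x_{r+1} = y` (Bruhat order) with all entries in `E`. -/
structure MChain (E : Set W) (x y : W) where
  r : ℕ
  c : Fin (r + 2) → W
  first : c 0 = x
  last : c (Fin.last (r + 1)) = y
  mem : ∀ i, c i ∈ E
  mono : ∀ i : Fin (r + 1), BruhatLE cs (c i.castSucc) (c i.succ)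

/-- An `E_J`-multichain is an `E_J`-chain when all steps are strict. -/
def MChain.IsStrict {E : Set W} {x y : W} (φ : MChain cs E x y) : Prop :=
  ∀ i : Fin (φ.r + 1), BruhatLT cs (φ.c i.castSucc) (φ.c i.succ)

-- auxiliary lemmas for stmt_9

lemma qp_mul_qp (a b : Γ) : qp Γ a * qp Γ b = qp Γ (a + b) := by
  simp [qp, AddMonoidAlgebra.single_mul_single]

lemma qp_zero' : qp Γ (0 : Γ) = 1 := rfl

lemma qp_ne_zero' (a : Γ) : qp Γ a ≠ 0 := by
  rw [qp, Ne, ← AddMonoidAlgebra.coeff_inj, AddMonoidAlgebra.coeff_single]; simp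

lemma barZ_apply' (f : LZ Γ) (γ : Γ) : (barZ Γ f).coeff γ = f.coeff (-γ) := by
  simp [barZ, AddMonoidAlgebra.coeff_domCongr]

lemma qp_mul_apply' (a : Γ) (f : LZ Γ) (γ : Γ) : (qp Γ a * f).coeff γ = f.coeff (-a + γ) := by
  simp [qp, AddMonoidAlgebra.coeff_single_mul_apply]

lemma Uhalf_eq_zero' {α : Γ} {f : LZ Γ} (h : ∀ γ ∈ f.coeff.support, γ + γ ≤ α) :
    Uhalf Γ α f = 0 := by
  ext γ
  rw [Uhalf, AddMonoidAlgebra.coeff_ofCoeff, Finsupp.filter_apply]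
  by_cases hγ : γ ∈ f.coeff.support
  · simp [not_lt.2 (h γ hγ)]
  · simp only [Finsupp.notMem_support_iff] at hγ
    simp [hγ]

lemma Uhalf_support' {α : Γ} {f : LZ Γ} {γ : Γ} (h : γ ∈ (Uhalf Γ α f).coeff.support) :
    α < γ + γ := by
  rw [Uhalf, AddMonoidAlgebra.coeff_ofCoeff, Finsupp.support_filter, Finset.mem_filter] at h
  exact h.2

/-- The key killing lemma: if `supp t ⊆ {γ : α ≤ 2γ}` then
`U_{α/2}(q^α · bar t) = 0`. -/
lemma Uhalf_qp_barZ_eq_zero {α : Γ} {t : LZ Γ} (ht : ∀ γ ∈ t.coeff.support, α ≤ γ + γ) :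
    Uhalf Γ α (qp Γ α * barZ Γ t) = 0 := by
  apply Uhalf_eq_zero'
  intro γ hγ
  rw [Finsupp.mem_support_iff, qp_mul_apply', barZ_apply'] at hγ
  have h2 : α - γ ∈ t.coeff.support := by
    rw [Finsupp.mem_support_iff]
    convert hγ using 2
    abel
  have := ht _ h2
  -- α ≤ (α - γ) + (α - γ)  ⇒  γ + γ ≤ α
  have : γ + γ ≤ α := by
    have h3 := this
    have : γ + γ + α ≤ α + α := by
      calc γ + γ + α ≤ γ + γ + ((α - γ) + (α - γ)) := by
            exact add_le_add (le_refl _) h3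
        _ = α + α := by abel
    exact le_of_add_le_add_right this
  exact this

lemma bruhatLE_length_le {u v : W} (h : BruhatLE cs u v) :
    cs.length u ≤ cs.length v := by
  induction h with
  | refl => exact le_refl _
  | tail _ step ih => exact ih.trans (le_of_lt step.1)

lemma bruhatLT_length_lt {u v : W} (h : BruhatLT cs u v) :
    cs.length u < cs.length v := by
  obtain ⟨hle, hne⟩ := h
  rcases Relation.ReflTransGen.cases_head hle with rfl | ⟨w, hw, hwv⟩
  · exact absurd rfl hne
  · exact lt_of_lt_of_le hw.1 (bruhatLE_length_le cs hwv)


lemma Uhalf_zero' (α : Γ) : Uhalf Γ α 0 = 0 := by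
  ext γ; rw [Uhalf, AddMonoidAlgebra.coeff_ofCoeff, Finsupp.filter_apply]; simp

lemma mem_support_one' {γ : Γ} (h : γ ∈ (1 : LZ Γ).coeff.support) : γ = 0 := by
  have h1 : (1 : LZ Γ) = AddMonoidAlgebra.single 0 1 := rfl
  rw [h1, AddMonoidAlgebra.coeff_single] at h
  simpa using Finsupp.support_single_subset h

theorem stmt_9
    {B W : Type} [Group W] {M : CoxeterMatrix B} (cs : CoxeterSystem M W)
    (Γ : Type) [AddCommGroup Γ] [LinearOrder Γ] [IsOrderedAddMonoid Γ]
    -- `L` is a weight function on `W` with values in `Γ`, nonnegative on simple reflections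
    (L : W → Γ)
    (hLadd : ∀ u v : W, cs.length (u * v) = cs.length u + cs.length v →
      L (u * v) = L u + L v)
    (hLpos : ∀ i : B, (0 : Γ) ≤ L (cs.simple i))
    -- `H` is the Hecke algebra of `(W, S, L)`, free over `ℤ[Γ]` with basis `{T_w}`
    {H : Type} [Ring H] [Algebra (LZ Γ) H]
    (T : Module.Basis W (LZ Γ) H)
    (hTone : T 1 = 1)
    (hTmul₁ : ∀ (i : B) (w : W), cs.length w < cs.length (cs.simple i * w) →
      T (cs.simple i) * T w = T (cs.simple i * w))
    (hTmul₂ : ∀ (i : B) (w : W), cs.length (cs.simple i * w) < cs.length w →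
      T (cs.simple i) * T w =
        qp Γ (L (cs.simple i)) • T (cs.simple i * w) + (qp Γ (L (cs.simple i)) - 1) • T w)
    -- the bar involution on `H`
    (barH : H ≃+* H)
    (hbarHsmul : ∀ (a : LZ Γ) (h : H), barH (a • h) = barZ Γ a • barH h)
    (hbarHT : ∀ i : B, barH (T (cs.simple i)) =
      qp Γ (-(L (cs.simple i))) • T (cs.simple i) + (qp Γ (-(L (cs.simple i))) - 1) • (1 : H))
    -- `E = E_J ⊆ D_J` is an ideal in the left weak Bruhat order
    (J : Set B) (E : Set W)
    (hED : E ⊆ DJ cs J)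
    (hIdeal : ∀ y ∈ E, ∀ x : W, IsSuffix cs x y → x ∈ E)
    -- `E` is a `W`-graph ideal: the module `M(E_J, L)` with basis `{Γ_y := G y : y ∈ E}`
    {MM : Type} [AddCommGroup MM] [Module (LZ Γ) MM] [Module H MM]
    [IsScalarTower (LZ Γ) H MM]
    (G : W → MM)
    (hGbasis : ∃ b : Module.Basis ↥E (LZ Γ) MM, ∀ y : ↥E, b y = G ↑y)
    (hSD : ∀ (i : B) (y : W), y ∈ E → cs.length (cs.simple i * y) < cs.length y →
      T (cs.simple i) • G y =
        qp Γ (L (cs.simple i)) • G (cs.simple i * y) + (qp Γ (L (cs.simple i)) - 1) • G y)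
    (hSA : ∀ (i : B) (y : W), y ∈ E → cs.length y < cs.length (cs.simple i * y) →
      cs.simple i * y ∈ E → T (cs.simple i) • G y = G (cs.simple i * y))
    (hWD : ∀ (i : B) (y : W), y ∈ E → cs.length y < cs.length (cs.simple i * y) →
      cs.simple i * y ∉ DJ cs J → T (cs.simple i) • G y = - G y)
    (hWA : ∀ (i : B) (y : W), y ∈ E → cs.length y < cs.length (cs.simple i * y) →
      cs.simple i * y ∈ DJ cs J → cs.simple i * y ∉ E →
      ∃ rr : W → LZ Γ, (∀ z : W, rr z ≠ 0 → z ∈ E ∧ BruhatLT cs z (cs.simple i * y)) ∧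
        (∀ z : W, ∃ g : LZ Γ, rr z = qp Γ (L (cs.simple i)) * g) ∧
        {z : W | rr z ≠ 0}.Finite ∧
        T (cs.simple i) • G y = qp Γ (L (cs.simple i)) • G y - ∑ᶠ z : W, rr z • G z)
    -- the `ℤ[Γ]`-semilinear bar involution on `M(E_J, L)`
    (barM : MM → MM)
    (hbarMadd : ∀ m m' : MM, barM (m + m') = barM m + barM m')
    (hbarMsmul : ∀ (a : LZ Γ) (m : MM), barM (a • m) = barZ Γ a • barM m)
    (hbarMone : barM (G 1) = G 1)
    (hbarMT : ∀ (w y : W), y ∈ E → barM (T w • G y) = barH (T w) • barM (G y))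
    -- the weighted `R`-polynomials
    (Rp : W → W → LZ Γ)
    (hRpzero : ∀ x y : W, x ∉ E ∨ y ∉ E → Rp x y = 0)
    (hRpdef : ∀ y ∈ E, barM (G y) =
      ∑ᶠ x ∈ E, (((eps cs x * eps cs y : ℤ) : LZ Γ) * qp Γ (-(L y)) * Rp x y) • G x)
    (x y : W) (hx : x ∈ E) (hy : y ∈ E)
    (hxy : BruhatLE cs x y)
    (r : ℕ) (c : Fin (r + 2) → W)
    (hc0 : c 0 = x) (hclast : c (Fin.last (r + 1)) = y)
    (hcmem : ∀ i, c i ∈ E)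
    (hcmono : ∀ i : Fin (r + 1), BruhatLE cs (c i.castSucc) (c i.succ))
    (hRne : RchainAux Γ L Rp r c ≠ 0)
    :
    ∀ i : Fin (r + 1), 1 ≤ (i : ℕ) → BruhatLT cs (c i.castSucc) (c i.succ) := by
  classical
  obtain ⟨b, hb⟩ := hGbasis
  have hL1 : L 1 = 0 := by
    have h := hLadd 1 1 (by simp)
    rw [one_mul] at h
    exact left_eq_add.mp h
  have hcomm : ∀ (h : H) (a : LZ Γ) (m : MM), h • a • m = a • h • m := by
    intro h a m
    have h1 : ∀ m' : MM, a • m' = (algebraMap (LZ Γ) H a) • m' := by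
      intro m'
      rw [Algebra.algebraMap_eq_smul_one, smul_assoc, one_smul]
    rw [h1 m, ← mul_smul, ← Algebra.commutes, mul_smul, ← h1]
  have hbarsmulG : ∀ (i : B) (m : MM),
      barH (T (cs.simple i)) • m =
        qp Γ (-(L (cs.simple i))) • (T (cs.simple i) • m)
          + (qp Γ (-(L (cs.simple i))) - 1) • m := by
    intro i m
    rw [hbarHT i, add_smul, smul_assoc, smul_assoc, one_smul]
  have hsuffix : ∀ (i : B) (w : W), w ∈ E →
      cs.length (cs.simple i * w) < cs.length w → cs.simple i * w ∈ E := by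
    intro i w hw hlen
    apply hIdeal w hw
    refine ⟨cs.simple i, (cs.simple_mul_simple_cancel_left i).symm, ?_⟩
    rcases cs.length_simple_mul w i with h | h
    · omega
    · rw [cs.length_simple]; omega
  set V : ℕ → Submodule (LZ Γ) MM :=
    fun n => Submodule.span (LZ Γ) {m | ∃ w, w ∈ E ∧ cs.length w < n ∧ m = G w} with hVdef
  have hGV : ∀ {w : W} {n : ℕ}, w ∈ E → cs.length w < n → G w ∈ V n := by
    intro w n hw hn
    exact Submodule.subset_span ⟨w, hw, hn, rfl⟩
  have hstep : ∀ (i : B) (w : W), w ∈ E → ∀ n : ℕ, cs.length w + 1 < n →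
      barH (T (cs.simple i)) • G w ∈ V n := by
    intro i w hw n hn
    rw [hbarsmulG]
    refine Submodule.add_mem _ ?_ (Submodule.smul_mem _ _ (hGV hw (by omega)))
    refine Submodule.smul_mem _ _ ?_
    rcases cs.length_simple_mul w i with hlen | hlen
    · -- ascent
      by_cases hswE : cs.simple i * w ∈ E
      · rw [hSA i w hw (by omega) hswE]
        exact hGV hswE (by omega)
      · by_cases hswD : cs.simple i * w ∈ DJ cs J
        · obtain ⟨rr, h1, h2, h3, h4⟩ := hWA i w hw (by omega) hswD hswE
          rw [h4]
          refine Submodule.sub_mem _ (Submodule.smul_mem _ _ (hGV hw (by omega))) ?_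
          have hsupp : (Function.support fun z => rr z • G z) ⊆ ↑h3.toFinset := by
            intro z hz
            rw [Function.mem_support] at hz
            rw [Set.Finite.coe_toFinset]
            intro h0
            exact hz (by rw [h0, zero_smul])
          rw [finsum_eq_sum_of_support_subset _ hsupp]
          refine Submodule.sum_mem _ ?_
          intro z hzF
          rw [Set.Finite.mem_toFinset] at hzF
          obtain ⟨hzE, hzlt⟩ := h1 z hzF
          have hzlen := bruhatLT_length_lt cs hzlt
          exact Submodule.smul_mem _ _ (hGV hzE (by omega))
        · rw [hWD i w hw (by omega) hswD]
          exact Submodule.neg_mem _ (hGV hw (by omega))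
    · -- descent
      rw [hSD i w hw (by omega)]
      exact Submodule.add_mem _
        (Submodule.smul_mem _ _ (hGV (hsuffix i w hw (by omega)) (by omega)))
        (Submodule.smul_mem _ _ (hGV hw (by omega)))
  have hbarV : ∀ (i : B) (n : ℕ) (v : MM), v ∈ V n →
      barH (T (cs.simple i)) • v ∈ V (n + 1) := by
    intro i n v hv
    induction hv using Submodule.span_induction with
    | mem m hm =>
        obtain ⟨w, hwE, hwn, rfl⟩ := hm
        exact hstep i w hwE (n + 1) (by omega)
    | zero => rw [smul_zero]; exact Submodule.zero_mem _
    | add u v _ _ hu hv => rw [smul_add]; exact Submodule.add_mem _ hu hv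
    | smul a u _ hu => rw [hcomm]; exact Submodule.smul_mem _ _ hu
  have hS : ∀ n : ℕ, ∀ z : W, z ∈ E → cs.length z = n →
      barM (G z) - qp Γ (-(L z)) • G z ∈ V n := by
    intro n
    induction n with
    | zero =>
        intro z hz hlen
        have hz1 : z = 1 := cs.length_eq_zero_iff.mp hlen
        subst hz1
        rw [hbarMone, hL1, neg_zero, qp_zero', one_smul, sub_self]
        exact Submodule.zero_mem _
    | succ n ih =>
        intro z hz hlen
        have hz1 : z ≠ 1 := by
          intro h; rw [h, cs.length_one] at hlen; omega
        obtain ⟨i, hi⟩ := cs.exists_leftDescent_of_ne_one hz1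
        have hi' : cs.length (cs.simple i * z) < cs.length z := hi
        set z' := cs.simple i * z with hz'def
        have hcancel : cs.simple i * z' = z := cs.simple_mul_simple_cancel_left i
        have hlenz' : cs.length z' = n := by
          rcases cs.length_simple_mul z i with h | h <;> rw [← hz'def] at h <;> omega
        have hz'E : z' ∈ E := hsuffix i z hz hi'
        have hTsz' : T (cs.simple i) • G z' = G z := by
          rw [hSA i z' hz'E (by rw [hcancel]; omega) (by rw [hcancel]; exact hz), hcancel]
        have hLz : L z = L (cs.simple i) + L z' := by
          conv_lhs => rw [← hcancel]
          exact hLadd _ _ (by rw [cs.length_simple, hcancel]; omega)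
        have ihz' := ih z' hz'E hlenz'
        set v' := barM (G z') - qp Γ (-(L z')) • G z' with hv'def
        have hexp : barM (G z') = qp Γ (-(L z')) • G z' + v' := by
          rw [hv'def]; abel
        have hbM : barM (G z) = barH (T (cs.simple i)) • barM (G z') := by
          rw [← hTsz', hbarMT _ _ hz'E]
        rw [hbM, hexp, smul_add]
        have h1 : barH (T (cs.simple i)) • (qp Γ (-(L z')) • G z')
            = qp Γ (-(L z)) • G z
              + (qp Γ (-(L z')) * (qp Γ (-(L (cs.simple i))) - 1)) • G z' := by
          rw [hcomm, hbarsmulG, hTsz', smul_add, smul_smul, smul_smul, qp_mul_qp]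
          congr 2
          rw [hLz]; abel
        rw [h1]
        have h2 : qp Γ (-(L z)) • G z
              + (qp Γ (-(L z')) * (qp Γ (-(L (cs.simple i))) - 1)) • G z'
              + barH (T (cs.simple i)) • v' - qp Γ (-(L z)) • G z
            = (qp Γ (-(L z')) * (qp Γ (-(L (cs.simple i))) - 1)) • G z'
              + barH (T (cs.simple i)) • v' := by abel
        rw [h2]
        exact Submodule.add_mem _
          (Submodule.smul_mem _ _ (hGV hz'E (by omega)))
          (hbarV i n v' ihz')
  have hreprV : ∀ (z : W) (hzE : z ∈ E) (n : ℕ), n ≤ cs.length z →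
      ∀ v ∈ V n, (b.repr v) ⟨z, hzE⟩ = 0 := by
    intro z hzE n hn v hv
    induction hv using Submodule.span_induction with
    | mem m hm =>
        obtain ⟨w, hwE, hwn, rfl⟩ := hm
        rw [← hb ⟨w, hwE⟩, b.repr_self]
        refine Finsupp.single_eq_of_ne' ?_
        intro hh
        have hwz : w = z := congrArg Subtype.val hh
        rw [hwz] at hwn
        omega
    | zero => simp
    | add u w _ _ hu hw => rw [map_add, Finsupp.add_apply, hu, hw, add_zero]
    | smul a u _ hu => rw [map_smul, Finsupp.smul_apply, hu, smul_zero]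
  have hRzz : ∀ z ∈ E, Rp z z = 1 := by
    intro z hz
    have hSz := hS (cs.length z) z hz rfl
    have hrz : (b.repr (barM (G z))) ⟨z, hz⟩ = qp Γ (-(L z)) := by
      have hsplit : barM (G z)
          = qp Γ (-(L z)) • G z + (barM (G z) - qp Γ (-(L z)) • G z) := by abel
      rw [hsplit, map_add, Finsupp.add_apply, map_smul, Finsupp.smul_apply,
        hreprV z hz _ le_rfl _ hSz, add_zero, ← hb ⟨z, hz⟩, b.repr_self,
        Finsupp.single_eq_same, smul_eq_mul, mul_one]
    have hdef := hRpdef z hz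
    by_cases hfin : (E ∩ Function.support fun x =>
        (((eps cs x * eps cs z : ℤ) : LZ Γ) * qp Γ (-(L z)) * Rp x z) • G x).Finite
    · rw [finsum_mem_eq_sum _ hfin] at hdef
      rw [hdef, map_sum, Finsupp.finset_sum_apply] at hrz
      have hterm : ∀ x ∈ hfin.toFinset,
          (b.repr ((((eps cs x * eps cs z : ℤ) : LZ Γ) * qp Γ (-(L z)) * Rp x z) • G x))
              ⟨z, hz⟩
            = if x = z then ((eps cs x * eps cs z : ℤ) : LZ Γ) * qp Γ (-(L z)) * Rp x z
              else 0 := by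
        intro x hx
        have hxE : x ∈ E := (hfin.mem_toFinset.mp hx).1
        rw [map_smul, Finsupp.smul_apply, ← hb ⟨x, hxE⟩, b.repr_self]
        by_cases hxz : x = z
        · subst hxz
          rw [if_pos rfl, Finsupp.single_eq_same, smul_eq_mul, mul_one]
        · rw [if_neg hxz,
            Finsupp.single_eq_of_ne' (fun hh => hxz (congrArg Subtype.val hh)),
            smul_eq_mul, mul_zero]
      rw [Finset.sum_congr rfl hterm, Finset.sum_ite_eq' hfin.toFinset z] at hrz
      by_cases hzF : z ∈ hfin.toFinset
      · rw [if_pos hzF] at hrz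
        have heps : ((eps cs z * eps cs z : ℤ) : LZ Γ) = 1 := by
          have he : (eps cs z * eps cs z : ℤ) = 1 := by
            rw [eps, ← pow_add]
            exact Even.neg_one_pow ⟨cs.length z, rfl⟩
          rw [he, Int.cast_one]
        rw [heps, one_mul] at hrz
        have hq : qp Γ (L z) * (qp Γ (-(L z)) * Rp z z) = qp Γ (L z) * qp Γ (-(L z)) := by
          rw [hrz]
        rw [← mul_assoc, qp_mul_qp] at hq
        have h0 : L z + -(L z) = 0 := by abel
        rw [h0, qp_zero', one_mul] at hq
        exact hq
      · rw [if_neg hzF] at hrz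
        exact absurd hrz.symm (qp_ne_zero' Γ _)
    · rw [finsum_mem_eq_zero_of_infinite hfin] at hdef
      rw [hdef, map_zero, Finsupp.zero_apply] at hrz
      exact absurd hrz.symm (qp_ne_zero' Γ _)
  -- support bound for the 𝓡-polynomial of a chain whose first step is an equality
  have hsuppt : ∀ (r' : ℕ) (c' : Fin (r' + 2) → W), c' 0 ∈ E → c' 0 = c' 1 →
      ∀ γ ∈ (RchainAux Γ L Rp r' c').coeff.support,
        L (c' (Fin.last (r' + 1))) - L (c' 0) ≤ γ + γ := by
    intro r'
    cases r' with
    | zero =>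
        intro c' h0E heq γ hγ
        have hone : RchainAux Γ L Rp 0 c' = 1 := by
          rw [RchainAux, Rsingle, ← heq, hRzz _ h0E, map_one, mul_one, sub_self, qp_zero']
        rw [hone] at hγ
        have hγ0 : γ = 0 := mem_support_one' Γ hγ
        have hlast : c' (Fin.last 1) = c' 0 := by
          have : (Fin.last 1 : Fin 2) = 1 := rfl
          rw [this, ← heq]
        rw [hγ0, hlast, sub_self, add_zero]
    | succ r'' =>
        intro c' h0E heq γ hγ
        have hone : Rsingle Γ L Rp (c' 0) (c' 1) = 1 := by
          rw [Rsingle, ← heq, hRzz _ h0E, map_one, mul_one, sub_self, qp_zero']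
        rw [RchainAux, hone, one_mul] at hγ
        have hlt := Uhalf_support' Γ hγ
        rw [← heq] at hlt
        exact le_of_lt hlt
  -- the main induction on the length of the multichain
  have main : ∀ (r : ℕ) (c : Fin (r + 2) → W), (∀ i, c i ∈ E) →
      (∀ i : Fin (r + 1), BruhatLE cs (c i.castSucc) (c i.succ)) →
      RchainAux Γ L Rp r c ≠ 0 →
      ∀ i : Fin (r + 1), 1 ≤ (i : ℕ) → BruhatLT cs (c i.castSucc) (c i.succ) := by
    intro r
    induction r with
    | zero =>
        intro c _ _ _ i hi
        exact absurd hi (by have := i.isLt; omega)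
    | succ r ih =>
        intro c hmem hmono hne i hi
        have hne12 : c 1 ≠ c 2 := by
          intro heq
          apply hne
          rw [RchainAux]
          apply mul_eq_zero_of_right
          apply Uhalf_qp_barZ_eq_zero
          intro γ hγ
          have h01 : ((fun j : Fin (r + 2) => c j.succ) 0 : W)
              = (fun j : Fin (r + 2) => c j.succ) 1 := by
            simp only []
            rw [Fin.succ_zero_eq_one]
            have : (1 : Fin (r + 2)).succ = 2 := rfl
            rw [this]
            exact heq
          have hmem0 : (fun j : Fin (r + 2) => c j.succ) 0 ∈ E := hmem _
          have hb := hsuppt r (fun j => c j.succ) hmem0 h01 γ hγ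
          have e1 : ((fun j : Fin (r + 2) => c j.succ) (Fin.last (r + 1)) : W)
              = c (Fin.last (r + 2)) := by
            simp only []
            rw [Fin.succ_last]
          have e2 : ((fun j : Fin (r + 2) => c j.succ) 0 : W) = c 1 := by
            simp only []
            rw [Fin.succ_zero_eq_one]
          rw [Fin.succ_last, Fin.succ_zero_eq_one] at hb
          exact hb
        by_cases hival : (i : ℕ) = 1
        · refine ⟨hmono i, ?_⟩
          have h1 : i.castSucc = (1 : Fin (r + 3)) := by
            ext
            simp [hival]
          have h2 : i.succ = (2 : Fin (r + 3)) := by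
            ext
            simp [hival]
            rw [Nat.mod_eq_of_lt (by omega)]
          rw [h1, h2]
          exact hne12
        · have htne : RchainAux Γ L Rp r (fun j => c j.succ) ≠ 0 := by
            intro h0
            apply hne
            rw [RchainAux, h0, map_zero, mul_zero, Uhalf_zero', mul_zero]
          have hmono' : ∀ j : Fin (r + 1),
              BruhatLE cs (((fun k : Fin (r + 2) => c k.succ)) j.castSucc)
                (((fun k : Fin (r + 2) => c k.succ)) j.succ) := by
            intro j
            have h := hmono j.succ
            simp only []
            rw [Fin.succ_castSucc]
            exact h
          set j : Fin (r + 1) := ⟨(i : ℕ) - 1, by have := i.isLt; omega⟩ with hjdef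
          have hj := ih (fun k => c k.succ) (fun k => hmem k.succ) hmono' htne j
            (by simp [hjdef]; omega)
          have e1 : (j.castSucc).succ = i.castSucc := by
            ext
            simp [hjdef]
            omega
          have e2 : (j.succ).succ = i.succ := by
            ext
            simp [hjdef]
            omega
          rw [e1, e2] at hj
          exact hj
  exact main r c hcmem hcmono hRne

end WGI
end
end

section
/- Let x ≤ y in E_J and let φ : x = x₀ ≤ x₁ ≤ ⋯ ≤ x_{k+1} = y be an E_J-multichain. If ℓ(y) − ℓ(x) < k, then 𝓡_φ = 0. -/
set_option linter.unusedVariables false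

open scoped Classical
noncomputable section
namespace WGI

variable (Γ : Type) [AddCommGroup Γ] [LinearOrder Γ] [IsOrderedAddMonoid Γ]

variable {B W : Type} [Group W] {M : CoxeterMatrix B} (cs : CoxeterSystem M W)

theorem stmt_10
    {B W : Type} [Group W] {M : CoxeterMatrix B} (cs : CoxeterSystem M W)
    (Γ : Type) [AddCommGroup Γ] [LinearOrder Γ] [IsOrderedAddMonoid Γ]
    -- `L` is a weight function on `W` with values in `Γ`, nonnegative on simple reflections
    (L : W → Γ)
    (hLadd : ∀ u v : W, cs.length (u * v) = cs.length u + cs.length v →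
      L (u * v) = L u + L v)
    (hLpos : ∀ i : B, (0 : Γ) ≤ L (cs.simple i))
    -- `H` is the Hecke algebra of `(W, S, L)`, free over `ℤ[Γ]` with basis `{T_w}`
    {H : Type} [Ring H] [Algebra (LZ Γ) H]
    (T : Module.Basis W (LZ Γ) H)
    (hTone : T 1 = 1)
    (hTmul₁ : ∀ (i : B) (w : W), cs.length w < cs.length (cs.simple i * w) →
      T (cs.simple i) * T w = T (cs.simple i * w))
    (hTmul₂ : ∀ (i : B) (w : W), cs.length (cs.simple i * w) < cs.length w →
      T (cs.simple i) * T w =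
        qp Γ (L (cs.simple i)) • T (cs.simple i * w) + (qp Γ (L (cs.simple i)) - 1) • T w)
    -- the bar involution on `H`
    (barH : H ≃+* H)
    (hbarHsmul : ∀ (a : LZ Γ) (h : H), barH (a • h) = barZ Γ a • barH h)
    (hbarHT : ∀ i : B, barH (T (cs.simple i)) =
      qp Γ (-(L (cs.simple i))) • T (cs.simple i) + (qp Γ (-(L (cs.simple i))) - 1) • (1 : H))
    -- `E = E_J ⊆ D_J` is an ideal in the left weak Bruhat order
    (J : Set B) (E : Set W)
    (hED : E ⊆ DJ cs J)
    (hIdeal : ∀ y ∈ E, ∀ x : W, IsSuffix cs x y → x ∈ E)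
    -- `E` is a `W`-graph ideal: the module `M(E_J, L)` with basis `{Γ_y := G y : y ∈ E}`
    {MM : Type} [AddCommGroup MM] [Module (LZ Γ) MM] [Module H MM]
    [IsScalarTower (LZ Γ) H MM]
    (G : W → MM)
    (hGbasis : ∃ b : Module.Basis ↥E (LZ Γ) MM, ∀ y : ↥E, b y = G ↑y)
    (hSD : ∀ (i : B) (y : W), y ∈ E → cs.length (cs.simple i * y) < cs.length y →
      T (cs.simple i) • G y =
        qp Γ (L (cs.simple i)) • G (cs.simple i * y) + (qp Γ (L (cs.simple i)) - 1) • G y)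
    (hSA : ∀ (i : B) (y : W), y ∈ E → cs.length y < cs.length (cs.simple i * y) →
      cs.simple i * y ∈ E → T (cs.simple i) • G y = G (cs.simple i * y))
    (hWD : ∀ (i : B) (y : W), y ∈ E → cs.length y < cs.length (cs.simple i * y) →
      cs.simple i * y ∉ DJ cs J → T (cs.simple i) • G y = - G y)
    (hWA : ∀ (i : B) (y : W), y ∈ E → cs.length y < cs.length (cs.simple i * y) →
      cs.simple i * y ∈ DJ cs J → cs.simple i * y ∉ E →
      ∃ rr : W → LZ Γ, (∀ z : W, rr z ≠ 0 → z ∈ E ∧ BruhatLT cs z (cs.simple i * y)) ∧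
        (∀ z : W, ∃ g : LZ Γ, rr z = qp Γ (L (cs.simple i)) * g) ∧
        {z : W | rr z ≠ 0}.Finite ∧
        T (cs.simple i) • G y = qp Γ (L (cs.simple i)) • G y - ∑ᶠ z : W, rr z • G z)
    -- the `ℤ[Γ]`-semilinear bar involution on `M(E_J, L)`
    (barM : MM → MM)
    (hbarMadd : ∀ m m' : MM, barM (m + m') = barM m + barM m')
    (hbarMsmul : ∀ (a : LZ Γ) (m : MM), barM (a • m) = barZ Γ a • barM m)
    (hbarMone : barM (G 1) = G 1)
    (hbarMT : ∀ (w y : W), y ∈ E → barM (T w • G y) = barH (T w) • barM (G y))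
    -- the weighted `R`-polynomials
    (Rp : W → W → LZ Γ)
    (hRpzero : ∀ x y : W, x ∉ E ∨ y ∉ E → Rp x y = 0)
    (hRpdef : ∀ y ∈ E, barM (G y) =
      ∑ᶠ x ∈ E, (((eps cs x * eps cs y : ℤ) : LZ Γ) * qp Γ (-(L y)) * Rp x y) • G x)
    (x y : W) (hx : x ∈ E) (hy : y ∈ E)
    (hxy : BruhatLE cs x y)
    (r : ℕ) (c : Fin (r + 2) → W)
    (hc0 : c 0 = x) (hclast : c (Fin.last (r + 1)) = y)
    (hcmem : ∀ i, c i ∈ E)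
    (hcmono : ∀ i : Fin (r + 1), BruhatLE cs (c i.castSucc) (c i.succ))
    (hlen : (cs.length y : ℤ) - (cs.length x : ℤ) < (r : ℤ))
    :
    RchainAux Γ L Rp r c = 0 := by
  classical
  obtain ⟨b, hb⟩ := hGbasis
  -- basic length facts about the Bruhat order
  have hlen_mono : ∀ {a d : W}, BruhatLE cs a d → cs.length a ≤ cs.length d := by
    intro a d h
    induction h with
    | refl => exact le_refl _
    | tail _ h2 ih => exact ih.trans (le_of_lt h2.1)
  have hle_eq : ∀ {a d : W}, BruhatLE cs a d → cs.length a = cs.length d → a = d := by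
    intro a d h
    induction h with
    | refl => exact fun _ => rfl
    | tail h1 h2 ih =>
      intro hlen2
      have h3 := hlen_mono h1
      have h4 := h2.1
      exact absurd hlen2 (by omega)
  have hlt_len : ∀ {a d : W}, BruhatLT cs a d → cs.length a < cs.length d := fun h =>
    lt_of_le_of_ne (hlen_mono h.1) fun he => h.2 (hle_eq h.1 he)
  -- facts about L
  have hL1 : L 1 = 0 := by
    have h := hLadd 1 1 (by simp)
    rw [one_mul] at h
    exact left_eq_add.mp h
  have hLs : ∀ (i : B) (w : W), cs.length (cs.simple i * w) = cs.length w + 1 →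
      L (cs.simple i * w) = L (cs.simple i) + L w := by
    intro i w h
    exact hLadd _ _ (by rw [h, cs.length_simple]; omega)
  -- facts about qp and barZ
  have hqp_mul : ∀ a d : Γ, qp Γ a * qp Γ d = qp Γ (a + d) := by
    intro a d
    unfold qp
    rw [AddMonoidAlgebra.single_mul_single, mul_one]
  have hqp0 : qp Γ (0:Γ) = 1 := (AddMonoidAlgebra.one_def).symm
  have hqp_ne : ∀ γ : Γ, qp Γ γ ≠ 0 := by
    intro γ h
    exact one_ne_zero (AddMonoidAlgebra.single_eq_zero.mp h)
  have hbarZ_apply : ∀ (f : LZ Γ) (γ : Γ), (barZ Γ f).coeff γ = f.coeff (-γ) := by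
    intro f γ
    simp [barZ, AddMonoidAlgebra.coeff_domCongr]
  -- commuting the two scalar actions on MM
  have hcomm : ∀ (a : LZ Γ) (h : H) (m : MM), h • (a • m) = a • (h • m) := by
    intro a h m
    have h1 : a • m = (a • (1:H)) • m := by rw [smul_assoc, one_smul]
    rw [h1, ← mul_smul, Algebra.mul_smul_comm, mul_one, smul_assoc]
  -- coefficients of basis vectors
  have hGE : ∀ (z : W) (hz : z ∈ E), G z = b ⟨z, hz⟩ := fun z hz => (hb ⟨z, hz⟩).symm
  have hrepr_G : ∀ (z : W) (hz : z ∈ E) (x : ↥E),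
      b.repr (G z) x = if (⟨z, hz⟩ : ↥E) = x then 1 else 0 := by
    intro z hz x
    rw [hGE z hz, b.repr_self]
    exact Finsupp.single_apply
  have hreprsmul : ∀ (a : LZ Γ) (n : MM) (xx : ↥E), b.repr (a • n) xx = a * b.repr n xx := by
    intro a n xx
    rw [b.repr.map_smul]
    rfl
  -- suffix fact
  have hsuffE : ∀ (i : B) (v : W), v ∈ E → cs.length (cs.simple i * v) + 1 = cs.length v →
      cs.simple i * v ∈ E := by
    intro i v hv h
    refine hIdeal v hv _ ⟨cs.simple i, ?_, ?_⟩
    · rw [cs.simple_mul_simple_cancel_left]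
    · rw [cs.length_simple]; omega
  -- the coefficient of T_s • G v at a basis element of larger length
  have hTcoeff : ∀ (i : B) (v : W) (hv : v ∈ E) (x : ↥E),
      cs.length v < cs.length (x : W) →
      b.repr (T (cs.simple i) • G v) x =
        if (x : W) = cs.simple i * v then 1 else 0 := by
    intro i v hv x hlvx
    have hxE : (x : W) ∈ E := x.2
    rcases cs.length_simple_mul v i with hasc | hdesc
    · -- ascent : ℓ(s v) = ℓ v + 1
      have hlt : cs.length v < cs.length (cs.simple i * v) := by omega
      by_cases hsvE : cs.simple i * v ∈ E
      · rw [hSA i v hv hlt hsvE, hrepr_G _ hsvE x]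
        simp [Subtype.ext_iff, eq_comm]
      · by_cases hsvD : cs.simple i * v ∈ DJ cs J
        · -- WA case
          obtain ⟨rr, hrr1, hrr2, hrr3, hrr4⟩ := hWA i v hv hlt hsvD hsvE
          have hxne : (x : W) ≠ cs.simple i * v := fun h => hsvE (h ▸ hxE)
          rw [if_neg hxne, hrr4, map_sub, Finsupp.sub_apply, hreprsmul, hrepr_G v hv x]
          have hxnv : (⟨v, hv⟩ : ↥E) ≠ x := by
            intro h
            rw [← h] at hlvx
            exact lt_irrefl _ hlvx
          rw [if_neg hxnv, mul_zero, zero_sub, neg_eq_zero]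
          -- coefficient of the finsum is zero
          have hsupp : (Function.support fun z : W => rr z • G z) ⊆ {z : W | rr z ≠ 0} := by
            intro z hz
            simp only [Function.mem_support] at hz
            intro h0
            exact hz (by rw [h0, zero_smul])
          have hfin : (Function.support fun z : W => rr z • G z).Finite :=
            Set.Finite.subset hrr3 hsupp
          have hmap := (((Finsupp.applyAddHom x).comp
            (b.repr.toLinearMap.toAddMonoidHom)) : MM →+ LZ Γ).map_finsum hfin
          simp only [AddMonoidHom.coe_comp, Function.comp_apply, LinearMap.toAddMonoidHom_coe,
            LinearEquiv.coe_coe, Finsupp.applyAddHom_apply] at hmap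
          rw [hmap]
          apply finsum_eq_zero_of_forall_eq_zero
          intro z
          by_cases hz : rr z = 0
          · rw [hz, zero_smul, map_zero, Finsupp.zero_apply]
          · obtain ⟨hzE, hzlt⟩ := hrr1 z hz
            have hzlen : cs.length z < cs.length (cs.simple i * v) := hlt_len hzlt
            have hzx : (⟨z, hzE⟩ : ↥E) ≠ x := by
              intro h
              have : cs.length z = cs.length (x : W) := by rw [← h]
              omega
            rw [hreprsmul, hrepr_G z hzE x, if_neg hzx, mul_zero]
        · -- WD case
          have hxne : (x : W) ≠ cs.simple i * v := fun h => hsvD (h ▸ hED hxE)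
          rw [if_neg hxne, hWD i v hv hlt hsvD, map_neg, Finsupp.neg_apply, hrepr_G v hv x]
          have hxnv : (⟨v, hv⟩ : ↥E) ≠ x := by
            intro h
            rw [← h] at hlvx
            exact lt_irrefl _ hlvx
          rw [if_neg hxnv, neg_zero]
    · -- descent : ℓ(s v) + 1 = ℓ v
      have hsvE : cs.simple i * v ∈ E := hsuffE i v hv hdesc
      have hxne : (x : W) ≠ cs.simple i * v := by
        intro h
        have : cs.length (x : W) = cs.length (cs.simple i * v) := by rw [h]
        omega
      rw [if_neg hxne, hSD i v hv (by omega), map_add, Finsupp.add_apply, hreprsmul, hreprsmul,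
        hrepr_G _ hsvE x, hrepr_G v hv x]
      have h1 : (⟨cs.simple i * v, hsvE⟩ : ↥E) ≠ x := by
        intro h
        have : cs.length (cs.simple i * v) = cs.length (x : W) := by rw [← h]
        omega
      have h2 : (⟨v, hv⟩ : ↥E) ≠ x := by
        intro h
        rw [← h] at hlvx
        exact lt_irrefl _ hlvx
      rw [if_neg h1, if_neg h2, mul_zero, mul_zero, add_zero]
  -- the key triangularity invariant
  have key : ∀ (n : ℕ) (u : W) (hu : u ∈ E), cs.length u = n →
      ∀ x : ↥E, cs.length u ≤ cs.length (x : W) →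
      b.repr (barM (G u)) x = if (x : W) = u then qp Γ (-(L u)) else 0 := by
    intro n
    induction n with
    | zero =>
      intro u hu hn x hx
      have hu1 : u = 1 := cs.length_eq_zero_iff.mp hn
      subst hu1
      rw [hbarMone, hrepr_G 1 hu x, hL1, neg_zero, hqp0]
      simp [Subtype.ext_iff, eq_comm]
    | succ n ih =>
      intro u hu hn x hx
      have hu1 : u ≠ 1 := by
        intro h
        rw [h, cs.length_one] at hn
        omega
      obtain ⟨i, hdesc⟩ := cs.exists_leftDescent_of_ne_one hu1
      have hlw : cs.length (cs.simple i * u) + 1 = cs.length u :=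
        (cs.isLeftDescent_iff).mp hdesc
      have hwE : cs.simple i * u ∈ E := hsuffE i u hu hlw
      have hsu : cs.simple i * (cs.simple i * u) = u := cs.simple_mul_simple_cancel_left i
      have hlwn : cs.length (cs.simple i * u) = n := by omega
      have hGu : G u = T (cs.simple i) • G (cs.simple i * u) := by
        rw [hSA i (cs.simple i * u) hwE (by rw [hsu]; omega) (by rw [hsu]; exact hu), hsu]
      have hbar : barM (G u) = barH (T (cs.simple i)) • barM (G (cs.simple i * u)) := by
        rw [hGu, hbarMT (cs.simple i) (cs.simple i * u) hwE]
      set w : W := cs.simple i * u with hwdef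
      set mm : MM := barM (G w) with hmm
      set S : Finset ↥E := (b.repr mm).support with hS
      have hmsum : mm = ∑ v ∈ S, (b.repr mm v) • b v := by
        conv_lhs => rw [← b.linearCombination_repr mm]
        rw [Finsupp.linearCombination_apply, Finsupp.sum]
      have hexp : barM (G u) = ∑ v ∈ S, (b.repr mm v) • (barH (T (cs.simple i)) • b v) := by
        rw [hbar]
        conv_lhs => rw [hmsum]
        rw [Finset.smul_sum]
        exact Finset.sum_congr rfl fun v _ => hcomm _ _ _
      -- coefficient of each term
      have hterm : ∀ v ∈ S,
          (b.repr ((b.repr mm v) • (barH (T (cs.simple i)) • b v))) x =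
          if (x : W) = u ∧ v = (⟨w, hwE⟩ : ↥E) then qp Γ (-(L w)) * qp Γ (-(L (cs.simple i)))
          else 0 := by
        intro v hv
        have hav : b.repr mm v ≠ 0 := Finsupp.mem_support_iff.mp hv
        have hlev : cs.length (v : W) ≤ n := by
          by_contra hcon
          push_neg at hcon
          have := ih w hwE hlwn v (by omega)
          rw [this] at hav
          by_cases hvw : (v : W) = w
          · have : cs.length (v : W) = n := by rw [hvw, hlwn]
            omega
          · rw [if_neg hvw] at hav
            exact hav rfl
        have hvE : (v : W) ∈ E := v.2
        have hbv : (b v : MM) = G (v : W) := by rw [hb v]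
        have hact : barH (T (cs.simple i)) • (b v : MM) =
            qp Γ (-(L (cs.simple i))) • (T (cs.simple i) • G (v : W)) +
            (qp Γ (-(L (cs.simple i))) - 1) • G (v : W) := by
          rw [hbv, hbarHT i, add_smul, smul_assoc, smul_assoc, one_smul]
        rw [hreprsmul, hact, map_add, Finsupp.add_apply, hreprsmul, hreprsmul,
          hTcoeff i (v : W) hvE x (by omega), hrepr_G (v : W) hvE x]
        have hxv : (⟨(v : W), hvE⟩ : ↥E) ≠ x := by
          intro h
          have : cs.length (v : W) = cs.length (x : W) := by rw [← h]
          omega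
        rw [if_neg hxv, mul_zero, add_zero]
        by_cases hcase : (x : W) = cs.simple i * (v : W)
        · -- then necessarily v = w and x = u
          have hlsv : cs.length (cs.simple i * (v : W)) ≤ cs.length (v : W) + 1 := by
            rcases cs.length_simple_mul (v : W) i with h1 | h1 <;> omega
          have hlxv : cs.length (x : W) = cs.length (v : W) + 1 := by
            have : cs.length (x : W) = cs.length (cs.simple i * (v : W)) := by rw [hcase]
            omega
          have hlevn : cs.length (v : W) = n := by omega
          have hvw : (v : W) = w := by
            have := ih w hwE hlwn v (by omega)
            rw [this] at hav
            by_cases hvw : (v : W) = w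
            · exact hvw
            · rw [if_neg hvw] at hav; exact absurd rfl hav
          have hxu : (x : W) = u := by rw [hcase, hvw, hwdef, hsu]
          have hveq : v = (⟨w, hwE⟩ : ↥E) := Subtype.ext hvw
          rw [if_pos hcase, mul_one, if_pos ⟨hxu, hveq⟩]
          have hmmv : b.repr mm v = qp Γ (-(L w)) := by
            have := ih w hwE hlwn v (by omega)
            rw [this, if_pos hvw]
          rw [hmmv]
        · rw [if_neg hcase, mul_zero]
          have : ¬((x : W) = u ∧ v = (⟨w, hwE⟩ : ↥E)) := by
            rintro ⟨hxu, hveq⟩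
            apply hcase
            rw [hxu, ← hsu]
            congr 1
            rw [hveq]
          rw [if_neg this, mul_zero]
      -- sum up
      have hLu : L u = L (cs.simple i) + L w := by
        rw [← hsu]
        exact hLs i w (by rw [hsu]; omega)
      have hqpu : qp Γ (-(L w)) * qp Γ (-(L (cs.simple i))) = qp Γ (-(L u)) := by
        rw [hqp_mul, hLu]
        congr 1
        abel
      rw [hexp, map_sum, Finsupp.finset_sum_apply]
      rw [Finset.sum_congr rfl hterm]
      by_cases hxu : (x : W) = u
      · have hmemS : (⟨w, hwE⟩ : ↥E) ∈ S := by
          rw [hS, Finsupp.mem_support_iff]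
          have := ih w hwE hlwn (⟨w, hwE⟩ : ↥E) (le_refl _)
          rw [this, if_pos rfl]
          exact hqp_ne _
        rw [if_pos hxu]
        simp only [hxu, true_and]
        rw [Finset.sum_ite_eq' S (⟨w, hwE⟩ : ↥E)
          (fun _ => qp Γ (-(L w)) * qp Γ (-(L (cs.simple i)))), if_pos hmemS, hqpu]
      · rw [if_neg hxu]
        apply Finset.sum_eq_zero
        intro v _
        rw [if_neg (by tauto)]
  -- R_{u,u} = 1 for u ∈ E
  have hRuu : ∀ (u : W), u ∈ E → Rp u u = 1 := by
    intro u hu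
    have hcoef := key (cs.length u) u hu rfl ⟨u, hu⟩ (le_refl _)
    rw [if_pos rfl] at hcoef
    rw [hRpdef u hu] at hcoef
    rw [finsum_mem_def] at hcoef
    set f : W → MM := fun z =>
      Set.indicator E (fun z => (((eps cs z * eps cs u : ℤ) : LZ Γ) * qp Γ (-(L u)) * Rp z u) • G z) z
      with hf
    by_cases hfin : (Function.support f).Finite
    · have hmap := (((Finsupp.applyAddHom (⟨u, hu⟩ : ↥E)).comp
        (b.repr.toLinearMap.toAddMonoidHom)) : MM →+ LZ Γ).map_finsum hfin
      simp only [AddMonoidHom.coe_comp, Function.comp_apply, LinearMap.toAddMonoidHom_coe,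
        LinearEquiv.coe_coe, Finsupp.applyAddHom_apply] at hmap
      rw [hmap] at hcoef
      have heval : ∀ z : W, b.repr (f z) (⟨u, hu⟩ : ↥E) =
          if z = u then ((eps cs u * eps cs u : ℤ) : LZ Γ) * qp Γ (-(L u)) * Rp u u else 0 := by
        intro z
        by_cases hz : z = u
        · subst hz
          rw [if_pos rfl, hf]
          simp only [Set.indicator_of_mem hu]
          rw [hreprsmul, hrepr_G z hu, if_pos rfl, mul_one]
        · rw [if_neg hz, hf]
          by_cases hzE : z ∈ E
          · simp only [Set.indicator_of_mem hzE]
            rw [hreprsmul, hrepr_G z hzE,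
              if_neg (fun h => hz (Subtype.ext_iff.mp h)), mul_zero]
          · simp only [Set.indicator_of_notMem hzE, map_zero, Finsupp.zero_apply]
      rw [finsum_congr heval] at hcoef
      rw [finsum_eq_single _ u (fun z hz => if_neg hz)] at hcoef
      rw [if_pos rfl] at hcoef
      have heps : ((eps cs u * eps cs u : ℤ) : LZ Γ) = 1 := by
        unfold eps
        rw [← pow_add]
        rw [Even.neg_one_pow ⟨cs.length u, rfl⟩]
        exact Int.cast_one
      rw [heps, one_mul] at hcoef
      have := congrArg (fun t => qp Γ (L u) * t) hcoef
      rw [← mul_assoc, hqp_mul, add_neg_cancel, hqp0, one_mul] at this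
      exact this
    · exfalso
      rw [finsum_of_infinite_support hfin] at hcoef
      rw [map_zero, Finsupp.zero_apply] at hcoef
      exact hqp_ne _ hcoef.symm
  -- vanishing of the truncation
  have hUzero : ∀ (α : Γ) (f : LZ Γ), (∀ δ ∈ f.coeff.support, α ≤ δ + δ) →
      Uhalf Γ α (qp Γ α * barZ Γ f) = 0 := by
    intro α f hf
    unfold Uhalf
    ext γ
    rw [AddMonoidAlgebra.coeff_ofCoeff, Finsupp.filter_apply, AddMonoidAlgebra.coeff_zero, Finsupp.zero_apply]
    split_ifs with h
    · show (AddMonoidAlgebra.single α (1:ℤ) * barZ Γ f).coeff γ = 0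
      rw [AddMonoidAlgebra.coeff_single_mul_apply, one_mul, hbarZ_apply]
      by_contra h0
      have hmem : -(-α + γ) ∈ f.coeff.support := Finsupp.mem_support_iff.mpr h0
      have h1 := hf _ hmem
      have h2 : -(-α + γ) = α - γ := by abel
      rw [h2] at h1
      -- h1 : α ≤ (α - γ) + (α - γ), h : α < γ + γ : contradiction
      have h3 : γ + γ ≤ α := by
        have h4 := add_le_add_left h1 (γ + γ - α)
        have e1 : α + (γ + γ - α) = γ + γ := by abel
        have e2 : (α - γ) + (α - γ) + (γ + γ - α) = α := by abel
        rw [e1, e2] at h4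
        exact h4
      exact absurd h (not_lt.mpr h3)
    · rfl
  -- the main chain lemma
  have lemA : ∀ (m : ℕ) (cc : Fin (m + 2) → W), (∀ i, cc i ∈ E) →
      (∀ i : Fin (m + 1), BruhatLE cs (cc i.castSucc) (cc i.succ)) →
      ((cs.length (cc (Fin.last (m + 1))) : ℤ) ≤ (cs.length (cc 0) : ℤ) + m) →
      ∀ γ ∈ (RchainAux Γ L Rp m cc).coeff.support,
        L (cc (Fin.last (m + 1))) - L (cc 0) ≤ γ + γ := by
    intro m
    induction m with
    | zero =>
      intro cc hmem hmono hdiff γ hγ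
      have h01 : BruhatLE cs (cc 0) (cc 1) := by
        have := hmono 0
        rwa [Fin.castSucc_zero, Fin.succ_zero_eq_one] at this
      have hlast : cc (Fin.last (0 + 1)) = cc 1 := rfl
      rw [hlast] at hdiff
      have heq : cc 0 = cc 1 := by
        apply hle_eq h01
        have h1 := hlen_mono h01
        omega
      have hRs : RchainAux Γ L Rp 0 cc = 1 := by
        show Rsingle Γ L Rp (cc 0) (cc 1) = 1
        unfold Rsingle
        rw [← heq, hRuu (cc 0) (hmem 0), sub_self, hqp0, map_one, one_mul]
      rw [hRs] at hγ
      have hone : (1 : LZ Γ) = AddMonoidAlgebra.single (0:Γ) (1:ℤ) := AddMonoidAlgebra.one_def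
      rw [hone, AddMonoidAlgebra.coeff_single, Finsupp.support_single_ne_zero _ one_ne_zero] at hγ
      have hγ0 : γ = 0 := Finset.mem_singleton.mp hγ
      rw [hlast, hγ0, ← heq, sub_self, add_zero]
    | succ m ihm =>
      intro cc hmem hmono hdiff γ hγ
      have h01 : BruhatLE cs (cc 0) (cc 1) := by
        have := hmono 0
        rwa [Fin.castSucc_zero, Fin.succ_zero_eq_one] at this
      set tail : Fin (m + 2) → W := fun i => cc i.succ with htail
      have htmem : ∀ i, tail i ∈ E := fun i => hmem _
      have htmono : ∀ i : Fin (m + 1), BruhatLE cs (tail i.castSucc) (tail i.succ) := by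
        intro i
        have := hmono i.succ
        rwa [← Fin.succ_castSucc] at this
      have htlast : tail (Fin.last (m + 1)) = cc (Fin.last (m + 2)) := by
        rw [htail]
        simp only
        rw [Fin.succ_last]
      have hchain : RchainAux Γ L Rp (m + 1) cc =
          Rsingle Γ L Rp (cc 0) (cc 1) *
            Uhalf Γ (L (cc (Fin.last (m + 2))) - L (cc 1))
              (qp Γ (L (cc (Fin.last (m + 2))) - L (cc 1)) *
                barZ Γ (RchainAux Γ L Rp m tail)) := rfl
      rcases eq_or_lt_of_le (hlen_mono h01) with heql | hlt
      · -- cc 0 = cc 1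
        have heq : cc 0 = cc 1 := hle_eq h01 heql
        have hRs : Rsingle Γ L Rp (cc 0) (cc 1) = 1 := by
          unfold Rsingle
          rw [← heq, hRuu (cc 0) (hmem 0), sub_self, hqp0, map_one, one_mul]
        rw [hchain, hRs, one_mul] at hγ
        unfold Uhalf at hγ
        rw [AddMonoidAlgebra.coeff_ofCoeff, Finsupp.support_filter, Finset.mem_filter] at hγ
        have h2 := hγ.2
        rw [← heq] at h2
        have hlast2 : cc (Fin.last (m + 1 + 1)) = cc (Fin.last (m + 2)) := rfl
        rw [hlast2]
        exact le_of_lt h2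
      · -- length of cc 0 < length of cc 1
        have htdiff : (cs.length (tail (Fin.last (m + 1))) : ℤ) ≤
            (cs.length (tail 0) : ℤ) + m := by
          rw [htlast]
          have ht0 : tail 0 = cc 1 := by
            rw [htail]
            simp only
            rw [Fin.succ_zero_eq_one]
          rw [ht0]
          have hdiff2 : (cs.length (cc (Fin.last (m + 2))) : ℤ) ≤
              (cs.length (cc 0) : ℤ) + (m + 1 : ℕ) := hdiff
          omega
        have hzero : Uhalf Γ (L (cc (Fin.last (m + 2))) - L (cc 1))
            (qp Γ (L (cc (Fin.last (m + 2))) - L (cc 1)) *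
              barZ Γ (RchainAux Γ L Rp m tail)) = 0 := by
          apply hUzero
          intro δ hδ
          have := ihm tail htmem htmono htdiff δ hδ
          rw [htlast] at this
          have ht0 : tail 0 = cc 1 := by
            rw [htail]
            simp only
            rw [Fin.succ_zero_eq_one]
          rw [ht0] at this
          exact this
        rw [hchain, hzero, mul_zero] at hγ
        simp at hγ
  -- finish
  cases r with
  | zero =>
    exfalso
    have := hlen_mono hxy
    omega
  | succ m =>
    have hchain : RchainAux Γ L Rp (m + 1) c =
        Rsingle Γ L Rp (c 0) (c 1) *
          Uhalf Γ (L (c (Fin.last (m + 2))) - L (c 1))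
            (qp Γ (L (c (Fin.last (m + 2))) - L (c 1)) *
              barZ Γ (RchainAux Γ L Rp m (fun i => c i.succ))) := rfl
    set tail : Fin (m + 2) → W := fun i => c i.succ with htail
    have htmem : ∀ i, tail i ∈ E := fun i => hcmem _
    have htmono : ∀ i : Fin (m + 1), BruhatLE cs (tail i.castSucc) (tail i.succ) := by
      intro i
      have := hcmono i.succ
      rwa [← Fin.succ_castSucc] at this
    have htlast : tail (Fin.last (m + 1)) = c (Fin.last (m + 2)) := by
      rw [htail]
      simp only
      rw [Fin.succ_last]
    have ht0 : tail 0 = c 1 := by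
      rw [htail]
      simp only
      rw [Fin.succ_zero_eq_one]
    have h01 : BruhatLE cs (c 0) (c 1) := by
      have := hcmono 0
      rwa [Fin.castSucc_zero, Fin.succ_zero_eq_one] at this
    have hx01 : cs.length (c 0) ≤ cs.length (c 1) := hlen_mono h01
    have hcl : c (Fin.last (m + 2)) = y := hclast
    have htdiff : (cs.length (tail (Fin.last (m + 1))) : ℤ) ≤
        (cs.length (tail 0) : ℤ) + m := by
      rw [htlast, ht0, hcl]
      have hx01' : cs.length x ≤ cs.length (c 1) := hc0 ▸ hx01
      omega
    have hzero : Uhalf Γ (L (c (Fin.last (m + 2))) - L (c 1))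
        (qp Γ (L (c (Fin.last (m + 2))) - L (c 1)) *
          barZ Γ (RchainAux Γ L Rp m tail)) = 0 := by
      apply hUzero
      intro δ hδ
      have := lemA m tail htmem htmono htdiff δ hδ
      rw [htlast, ht0] at this
      exact this
    rw [hchain, hzero, mul_zero]

end WGI
end
end
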